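/- Let α, β, γ, λ, μ be real numbers and let N(α,β,γ,λ,μ) be the 3×3 real matrix whose rows are (α,β,γ), (λα,λβ,λγ), (μα,μβ,μγ). Suppose α ≠ 0 and α² + λβ² + μγ² = 0. If one of the following holds: (1) γ = 0, λβμ ≠ 0 and μ > 0; (2) β = 0, λγμ ≠ 0 and λ > 0; (3) λβγμ ≠ 0; then the evolution algebra E_{N(α,β,γ,λ,μ)} is isomorphic to the evolution algebra E₂ whose structure matrix has rows (1,1,0), (−1,−1,0), (1,1,0). -/

import Mathlib

/-- Evolution algebra multiplication on ℝ³ determined by a structure matrix `A`: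
`(x ∗_A y) j = ∑ i, x i * y i * A i j`. -/
def evolMul (A : Matrix (Fin 3) (Fin 3) ℝ) (x y : Fin 3 → ℝ) : Fin 3 → ℝ :=
  fun j => ∑ i, x i * y i * A i j

/-- The evolution algebras with structure matrices `A` and `B` are isomorphic:
there is an ℝ-linear equivalence of ℝ³ intertwining the two multiplications. -/
def EvolIso (A B : Matrix (Fin 3) (Fin 3) ℝ) : Prop :=
  ∃ f : (Fin 3 → ℝ) ≃ₗ[ℝ] (Fin 3 → ℝ),
    ∀ x y, f (evolMul A x y) = evolMul B (f x) (f y)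

theorem stmt (a b c l m : ℝ)
    (ha : a ≠ 0) (hq : a ^ 2 + l * b ^ 2 + m * c ^ 2 = 0)
    (hcond : (c = 0 ∧ l * b * m ≠ 0 ∧ m > 0) ∨ (b = 0 ∧ l * c * m ≠ 0 ∧ l > 0) ∨
             l * b * c * m ≠ 0) :
    EvolIso (!![a, b, c; l * a, l * b, l * c; m * a, m * b, m * c] : Matrix (Fin 3) (Fin 3) ℝ) (!![1, 1, 0; -1, -1, 0; 1, 1, 0] : Matrix (Fin 3) (Fin 3) ℝ) := by
  have hl : l ≠ 0 := by
    rcases hcond with ⟨_, h, _⟩ | ⟨_, _, h⟩ | h <;> intro h0 <;> rw [h0] at h <;>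
      simp at h <;> try exact lt_irrefl 0 h
  have hm : m ≠ 0 := by
    rcases hcond with ⟨_, _, h⟩ | ⟨_, h, _⟩ | h <;> intro h0 <;> rw [h0] at h <;>
      simp at h <;> try exact lt_irrefl 0 h
  -- the (denominator-cleared) structure matrix of the isomorphism
  set Mt : Matrix (Fin 3) (Fin 3) ℝ :=
    !![a * (a ^ 2 - l * m), l * b * (l * m + a ^ 2), m * c * (l * m + a ^ 2);
       -(a * (a ^ 2 + l * m)), l * b * (l * m - a ^ 2), m * c * (l * m - a ^ 2);
       0, -(2 * a * c * l * m), 2 * a * b * l * m] with hMt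
  set M : Matrix (Fin 3) (Fin 3) ℝ := (2 * a ^ 2)⁻¹ • Mt with hM
  have h2a : (2 * a ^ 2) ≠ 0 := by positivity
  have hdetMt : Mt.det = -(8 * a ^ 6 * l ^ 2 * m ^ 2) := by
    rw [hMt, Matrix.det_fin_three]
    simp [Matrix.cons_val]
    linear_combination (8 * a ^ 4 * l ^ 2 * m ^ 2) * hq
  have hdet : M.det ≠ 0 := by
    rw [hM, Matrix.det_smul, hdetMt]
    simp only [Fintype.card_fin]
    have h1 : ((2 * a ^ 2)⁻¹ : ℝ) ^ 3 ≠ 0 := pow_ne_zero 3 (inv_ne_zero h2a)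
    have h2 : (-(8 * a ^ 6 * l ^ 2 * m ^ 2) : ℝ) ≠ 0 := by
      intro h
      have : (8 : ℝ) * a ^ 6 * l ^ 2 * m ^ 2 ≠ 0 := by positivity
      exact this (by linarith)
    exact mul_ne_zero h1 h2
  have hInv : Invertible M := M.invertibleOfIsUnitDet (isUnit_iff_ne_zero.2 hdet)
  refine ⟨M.toLinearEquiv' hInv, ?_⟩
  intro x y
  have happ : ∀ v, (M.toLinearEquiv' hInv) v = M.mulVec v := fun v => rfl
  simp only [happ]
  have hmv : ∀ v : Fin 3 → ℝ, M.mulVec v = (2 * a ^ 2)⁻¹ • Mt.mulVec v := by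
    intro v; rw [hM, Matrix.smul_mulVec]
  -- Step 1 : Mt maps (evolMul A x y) to a multiple of (1,1,0)
  have h1 : Mt.mulVec (evolMul !![a, b, c; l * a, l * b, l * c; m * a, m * b, m * c] x y)
      = ![-(2 * a ^ 2 * l * m) * (x 0 * y 0 + l * (x 1 * y 1) + m * (x 2 * y 2)),
          -(2 * a ^ 2 * l * m) * (x 0 * y 0 + l * (x 1 * y 1) + m * (x 2 * y 2)), 0] := by
    funext i
    fin_cases i
    · simp [hMt, evolMul, Matrix.mulVec, dotProduct, Fin.sum_univ_three]
      linear_combination ((l * m + a ^ 2) * (x 0 * y 0 + l * (x 1 * y 1) + m * (x 2 * y 2))) * hq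
    · simp [hMt, evolMul, Matrix.mulVec, dotProduct, Fin.sum_univ_three]
      linear_combination ((l * m - a ^ 2) * (x 0 * y 0 + l * (x 1 * y 1) + m * (x 2 * y 2))) * hq
    · simp [hMt, evolMul, Matrix.mulVec, dotProduct, Fin.sum_univ_three]
      ring
  -- Step 2 : the target multiplication in closed form
  have h2 : ∀ u v : Fin 3 → ℝ, evolMul !![1, 1, 0; -1, -1, 0; 1, 1, 0] u v
      = ![u 0 * v 0 - u 1 * v 1 + u 2 * v 2, u 0 * v 0 - u 1 * v 1 + u 2 * v 2, 0] := by
    intro u v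
    funext i
    fin_cases i <;>
      simp [evolMul, Fin.sum_univ_three] <;>
      ring
  -- Step 3 : Mt is a similarity for the two quadratic forms
  have h3 : (Mt.mulVec x 0) * (Mt.mulVec y 0) - (Mt.mulVec x 1) * (Mt.mulVec y 1)
        + (Mt.mulVec x 2) * (Mt.mulVec y 2)
      = -(4 * a ^ 4 * l * m) * (x 0 * y 0 + l * (x 1 * y 1) + m * (x 2 * y 2)) := by
    simp [hMt, Matrix.mulVec, dotProduct, Fin.sum_univ_three]
    linear_combination (4 * a ^ 2 * l ^ 2 * m * (x 1 * y 1)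
      + 4 * a ^ 2 * l * m ^ 2 * (x 2 * y 2)) * hq
  -- conclusion
  rw [hmv, hmv, hmv, h1, h2]
  have hinv : (2 * a ^ 2) * (2 * a ^ 2)⁻¹ = 1 := mul_inv_cancel₀ h2a
  funext j
  fin_cases j <;>
    simp only [Pi.smul_apply, smul_eq_mul, Matrix.cons_val_zero, Matrix.cons_val_one,
      Matrix.head_cons, Fin.zero_eta, Fin.mk_one, Fin.isValue, Matrix.cons_val_two,
      Matrix.tail_cons, mul_zero, Fin.reduceFinMk]
  · linear_combination (-((2 * a ^ 2)⁻¹ * (2 * a ^ 2)⁻¹)) * h3 +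
      (2 * a ^ 2 * l * m * (x 0 * y 0 + l * (x 1 * y 1) + m * (x 2 * y 2)) *
        (2 * a ^ 2)⁻¹) * hinv
  · linear_combination (-((2 * a ^ 2)⁻¹ * (2 * a ^ 2)⁻¹)) * h3 +
      (2 * a ^ 2 * l * m * (x 0 * y 0 + l * (x 1 * y 1) + m * (x 2 * y 2)) *
        (2 * a ^ 2)⁻¹) * hinv
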